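/- Let M^m be a biharmonic hypersurface of constant scalar curvature in S^{m+1}. Then the mean curvature H satisfies the Bochner-type differential inequality (1/2)Δ|∇H|² ≥ (1/m)(ΔH)² + (|A|² − 1 + (5/4)m²H²)|∇H|². -/
import Mathlib


noncomputable section

open scoped RealInnerProductSpace BigOperators

/-- Abstract data encoding an isometrically immersed (connected, orientable) hypersurface
`M^m ↪ N^{m+1}`: `V` is a model for the tangent spaces of `M` (an `m`-dimensional real
inner product space), `A` is the shape operator field, `H` the mean curvature function
(so `trace A = m H`), together with the gradient, Laplace and Hessian operators and the
Ricci curvature of the induced metric, subject to the standard rules of Riemannian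
calculus (connectedness of `M` is encoded by `const_of_grad`, and the Bochner formula
holds).  `mixed p X Y` denotes the ambient curvature term `R^N(X, ξ, Y, ξ)` at `p`,
where `ξ` is the chosen unit normal. -/
structure HypersurfaceData (m : ℕ) (M : Type) (V : Type)
    [NormedAddCommGroup V] [InnerProductSpace ℝ V] [FiniteDimensional ℝ V] : Type where
  dimV : Module.finrank ℝ V = m
  /-- the shape operator -/
  A : M → V →ₗ[ℝ] V
  A_symm : ∀ p (x y : V), ⟪A p x, y⟫ = ⟪x, A p y⟫
  /-- the mean curvature function -/
  H : M → ℝ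
  trace_A : ∀ p, LinearMap.trace ℝ V (A p) = m * H p
  /-- the gradient operator of `(M, g)` -/
  grad : (M → ℝ) → M → V
  /-- the Laplace operator of `(M, g)` -/
  lap : (M → ℝ) → M → ℝ
  /-- `hess2 f` is `|∇df|²`, the squared norm of the Hessian of `f` -/
  hess2 : (M → ℝ) → M → ℝ
  /-- the Ricci curvature of `(M, g)` -/
  ricci : M → V → V → ℝ
  /-- `mixed p X Y = R^N(X, ξ, Y, ξ)` -/
  mixed : M → V → V → ℝ
  grad_add : ∀ f g : M → ℝ, grad (fun p => f p + g p) = fun p => grad f p + grad g p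
  grad_mul : ∀ f g : M → ℝ,
    grad (fun p => f p * g p) = fun p => f p • grad g p + g p • grad f p
  grad_const : ∀ c : ℝ, grad (fun _ => c) = fun _ => 0
  lap_const : ∀ c : ℝ, lap (fun _ => c) = fun _ => 0
  const_of_grad : ∀ f : M → ℝ, (∀ p, grad f p = 0) → ∀ p q, f p = f q
  hess2_nonneg : ∀ f p, 0 ≤ hess2 f p
  hess2_bound : ∀ f p, (lap f p) ^ 2 ≤ m * hess2 f p
  bochner : ∀ (f : M → ℝ) (p : M),
    lap (fun q => ‖grad f q‖ ^ 2) p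
      = 2 * (hess2 f p + ricci p (grad f p) (grad f p) + ⟪grad f p, grad (lap f) p⟫)

namespace HypersurfaceData

variable {m : ℕ} {M V : Type} [NormedAddCommGroup V] [InnerProductSpace ℝ V]
  [FiniteDimensional ℝ V] (D : HypersurfaceData m M V)

/-- `|A|²`, the squared norm of the shape operator. -/
def normA2 (p : M) : ℝ := LinearMap.trace ℝ V (D.A p ∘ₗ D.A p)

/-- The scalar curvature of `M` (trace of the Ricci curvature). -/
def scal (p : M) : ℝ :=
  ∑ i, D.ricci p (stdOrthonormalBasis ℝ V i) (stdOrthonormalBasis ℝ V i)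

/-- `M` has constant scalar curvature. -/
def ConstScal : Prop := ∀ p q, D.scal p = D.scal q

/-- `M` is minimal, i.e. `H ≡ 0`. -/
def Minimal : Prop := ∀ p, D.H p = 0

/-- The biharmonic equations for a hypersurface of an Einstein manifold with
`Ric^N = lam·h` :  `ΔH = H(|A|² - lam)` and `A(∇H) + (m/2) H ∇H = 0`. -/
def IsBiharmonic (lam : ℝ) : Prop :=
  (∀ p, D.lap D.H p = D.H p * (D.normA2 p - lam)) ∧
  (∀ p, D.A p (D.grad D.H p) + ((m : ℝ) / 2 * D.H p) • D.grad D.H p = 0)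

/-- The contracted Gauss equation for a hypersurface of a space form of constant
sectional curvature `C`, where `Ric^N(X,Y) = m C ⟨X,Y⟩` and `R^N(X,ξ,Y,ξ) = C ⟨X,Y⟩`
for tangent `X, Y`. -/
def SpaceFormGauss (C : ℝ) : Prop :=
  ∀ p (X Y : V), (m : ℝ) * C * ⟪X, Y⟫
    = D.ricci p X Y + ⟪D.A p X, D.A p Y⟫ - m * D.H p * ⟪D.A p X, Y⟫ + C * ⟪X, Y⟫

/-- The contracted Gauss equation for a hypersurface of an Einstein manifold with
`Ric^N = lam·h`. -/
def EinsteinAmbientGauss (lam : ℝ) : Prop :=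
  ∀ p (X Y : V), lam * ⟪X, Y⟫
    = D.ricci p X Y + ⟪D.A p X, D.A p Y⟫ - m * D.H p * ⟪D.A p X, Y⟫ + D.mixed p X Y

/-- `Ric^N(ξ,ξ) = lam`: the trace over the tangent directions of `R^N(·,ξ,·,ξ)`
equals the ambient Ricci curvature in the normal direction. -/
def MixedTrace (lam : ℝ) : Prop :=
  ∀ p, ∑ i, D.mixed p (stdOrthonormalBasis ℝ V i) (stdOrthonormalBasis ℝ V i) = lam

end HypersurfaceData


/-- Trace of an endomorphism via the standard orthonormal basis. -/
lemma trace_eq_sum_inner_std {V : Type} [NormedAddCommGroup V] [InnerProductSpace ℝ V]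
    [FiniteDimensional ℝ V] (T : V →ₗ[ℝ] V) :
    LinearMap.trace ℝ V T = ∑ i, ⟪stdOrthonormalBasis ℝ V i, T (stdOrthonormalBasis ℝ V i)⟫ := by
  set b := stdOrthonormalBasis ℝ V
  rw [LinearMap.trace_eq_matrix_trace ℝ b.toBasis, Matrix.trace]
  congr 1
  ext i
  rw [Matrix.diag_apply, LinearMap.toMatrix_apply, OrthonormalBasis.coe_toBasis,
    OrthonormalBasis.coe_toBasis_repr_apply, OrthonormalBasis.repr_apply_apply]

/-- **The Bochner-type inequality for a biharmonic hypersurface of constant scalar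
curvature in the unit sphere.**  Let `M^m` be a biharmonic hypersurface of constant
scalar curvature in `S^{m+1}`.  Then the mean curvature `H` satisfies
`(1/2)Δ|∇H|² ≥ (1/m)(ΔH)² + (|A|² − 1 + (5/4)m²H²)|∇H|²` at every point. -/
theorem bochner_inequality_biharmonic_sphere {M V : Type}
    [NormedAddCommGroup V] [InnerProductSpace ℝ V] [FiniteDimensional ℝ V]
    {m : ℕ} (hm : 0 < m) (D : HypersurfaceData m M V)
    (hgauss : D.SpaceFormGauss 1) (hscal : D.ConstScal)
    (hbh : D.IsBiharmonic m) :
    ∀ p, 1 / (m : ℝ) * (D.lap D.H p) ^ 2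
        + (D.normA2 p - 1 + 5 / 4 * (m : ℝ) ^ 2 * (D.H p) ^ 2) * ‖D.grad D.H p‖ ^ 2
      ≤ 1 / 2 * D.lap (fun q => ‖D.grad D.H q‖ ^ 2) p := by
  intro p
  obtain ⟨hb1, hb2⟩ := hbh
  set X := D.grad D.H p with hX
  -- A ∇H = -(m/2) H ∇H
  have hAX : D.A p X = (-((m : ℝ) / 2 * D.H p)) • X := by
    have h' := eq_neg_of_add_eq_zero_left (hb2 p)
    rw [hX, h', neg_smul]
  -- Gauss trace: |A|^2 = m^2 - m - scal + m^2 H^2 at every point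
  have hA2 : ∀ q : M, D.normA2 q
      = (m : ℝ) ^ 2 - m - D.scal q + (m : ℝ) ^ 2 * (D.H q) ^ 2 := by
    intro q
    set b := stdOrthonormalBasis ℝ V
    have hnorm : ∀ i, ⟪b i, b i⟫ = (1 : ℝ) := fun i => by
      rw [real_inner_self_eq_norm_sq, b.orthonormal.1 i]; norm_num
    have hAA : ∀ i, ⟪D.A q (b i), D.A q (b i)⟫ = ⟪b i, (D.A q ∘ₗ D.A q) (b i)⟫ := by
      intro i; rw [LinearMap.comp_apply, ← D.A_symm]; exact real_inner_comm _ _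
    have hcard : (Fintype.card (Fin (Module.finrank ℝ V)) : ℝ) = (m : ℝ) := by
      simp [D.dimV]
    have htrA2 : D.normA2 q = ∑ i, ⟪D.A q (b i), D.A q (b i)⟫ := by
      rw [HypersurfaceData.normA2, trace_eq_sum_inner_std]
      exact Finset.sum_congr rfl fun i _ => (hAA i).symm
    have htrA : (∑ i, ⟪D.A q (b i), b i⟫) = (m : ℝ) * D.H q := by
      rw [← D.trace_A q, trace_eq_sum_inner_std]
      exact Finset.sum_congr rfl fun i _ => by rw [D.A_symm]
    have hsum' : (m : ℝ) * 1 * ((Fintype.card (Fin (Module.finrank ℝ V))) : ℝ)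
        = D.scal q + D.normA2 q - m * D.H q * ((m : ℝ) * D.H q)
          + 1 * ((Fintype.card (Fin (Module.finrank ℝ V))) : ℝ) := by
      have : (∑ _i : Fin (Module.finrank ℝ V), (m : ℝ) * 1 * 1)
          = ∑ i, (D.ricci q (b i) (b i) + ⟪D.A q (b i), D.A q (b i)⟫
              - m * D.H q * ⟪D.A q (b i), b i⟫ + 1 * ⟪b i, b i⟫) := by
        refine Finset.sum_congr rfl fun i _ => ?_
        have h := hgauss q (b i) (b i)
        rw [hnorm i] at h ⊢
        linarith [h]
      have hs : D.scal q = ∑ i, D.ricci q (b i) (b i) := rfl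
      rw [Finset.sum_add_distrib, Finset.sum_sub_distrib, Finset.sum_add_distrib,
        ← Finset.mul_sum, ← Finset.mul_sum, ← hs, ← htrA2, htrA] at this
      simp only [hnorm, one_mul, mul_one, Finset.sum_const, Finset.card_univ,
        nsmul_eq_mul, smul_eq_mul] at this
      linarith [this]
    rw [hcard] at hsum'
    linear_combination -hsum'
  -- constancy of |A|^2 - m^2 H^2
  have hc : ∀ q : M, D.normA2 q - (m : ℝ) ^ 2 * (D.H q) ^ 2
      = D.normA2 p - (m : ℝ) ^ 2 * (D.H p) ^ 2 := by
    intro q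
    have := hscal q p
    rw [hA2 q, hA2 p]
    linarith
  set c : ℝ := D.normA2 p - (m : ℝ) ^ 2 * (D.H p) ^ 2 - m with hcdef
  -- lap H as a cubic in H
  have hlapH : D.lap D.H = fun q => c * D.H q + (m : ℝ) ^ 2 * (D.H q * D.H q * D.H q) := by
    funext q
    rw [hb1 q, hcdef]
    linear_combination D.H q * hc q
  -- gradient of lap H
  have hg2 : D.grad (fun q => D.H q * D.H q)
      = fun q => (2 * D.H q) • D.grad D.H q := by
    rw [D.grad_mul D.H D.H]
    funext q
    rw [two_mul, add_smul]
  have hg3 : D.grad (fun q => D.H q * D.H q * D.H q)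
      = fun q => (3 * (D.H q * D.H q)) • D.grad D.H q := by
    have := D.grad_mul (fun q => D.H q * D.H q) D.H
    rw [this, hg2]
    funext q
    simp only [smul_smul]
    rw [← add_smul]
    ring_nf
  have hgc : ∀ (a : ℝ) (g : M → ℝ), D.grad (fun q => a * g q) = fun q => a • D.grad g q := by
    intro a g
    rw [D.grad_mul (fun _ => a) g]
    funext q
    rw [D.grad_const a]
    simp
  have hgradlap : D.grad (D.lap D.H) p
      = (c + 3 * (m : ℝ) ^ 2 * (D.H p) ^ 2) • X := by
    rw [hlapH, D.grad_add (fun q => c * D.H q)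
      (fun q => (m : ℝ) ^ 2 * (D.H q * D.H q * D.H q)), hgc c D.H,
      hgc ((m : ℝ) ^ 2) (fun q => D.H q * D.H q * D.H q)]
    have h3 := congrFun hg3 p
    beta_reduce
    rw [h3, hX, smul_smul, ← add_smul]
    ring_nf
  -- Ricci term
  have hric : D.ricci p X X
      = ((m : ℝ) - 1 - 3 / 4 * (m : ℝ) ^ 2 * (D.H p) ^ 2) * ‖X‖ ^ 2 := by
    have hg := hgauss p X X
    rw [hAX] at hg
    rw [real_inner_self_eq_norm_sq] at hg
    rw [real_inner_smul_left, real_inner_smul_left, real_inner_smul_right,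
      real_inner_self_eq_norm_sq] at hg
    nlinarith [hg]
  -- Bochner
  have hboch := D.bochner D.H p
  have hhess := D.hess2_bound D.H p
  have hinner : ⟪X, D.grad (D.lap D.H) p⟫
      = (c + 3 * (m : ℝ) ^ 2 * (D.H p) ^ 2) * ‖X‖ ^ 2 := by
    rw [hgradlap, real_inner_smul_right, real_inner_self_eq_norm_sq]
  have hm' : (0 : ℝ) < m := by exact_mod_cast hm
  have hhess' : (D.lap D.H p) ^ 2 / m ≤ D.hess2 D.H p := by
    rw [div_le_iff₀ hm', mul_comm]
    exact hhess
  have key : 1 / 2 * D.lap (fun q => ‖D.grad D.H q‖ ^ 2) p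
      = D.hess2 D.H p + D.ricci p X X + ⟪X, D.grad (D.lap D.H) p⟫ := by
    rw [hboch]; ring
  rw [key, hric, hinner, hcdef]
  have heq : ((m : ℝ) - 1 - 3 / 4 * (m : ℝ) ^ 2 * (D.H p) ^ 2) * ‖X‖ ^ 2
      + ((D.normA2 p - (m : ℝ) ^ 2 * (D.H p) ^ 2 - m) + 3 * (m : ℝ) ^ 2 * (D.H p) ^ 2) * ‖X‖ ^ 2
      = (D.normA2 p - 1 + 5 / 4 * (m : ℝ) ^ 2 * (D.H p) ^ 2) * ‖X‖ ^ 2 := by ring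
  have h1 : 1 / (m : ℝ) * (D.lap D.H p) ^ 2 = (D.lap D.H p) ^ 2 / m := by ring
  linarith [hhess', heq, h1]
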